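/- Let y₁, y₂ ∈ ℝ and let θ* be a critical point of the quartic objective E with E''(θ*) > 0. If y₁ ≤ θ*², then for every α ≥ 0 the point θ* is a strict local minimum point of the α-expanded objective E_α; in particular, the RE constant of θ* equals ∞. -/

import Mathlib

open Filter Topology
open scoped ENNReal

/-- The quartic least-squares objective `E(θ) = ½((y₁ − θ²)² + (y₂ − θ)²)`. -/
noncomputable def quarticE (y₁ y₂ : ℝ) (θ : ℝ) : ℝ :=
  (1 / 2) * ((y₁ - θ ^ 2) ^ 2 + (y₂ - θ) ^ 2)

/-- The `α`-expanded quartic objective at the point `θs`. -/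
noncomputable def quarticEexp (y₁ y₂ θs α : ℝ) (θ : ℝ) : ℝ :=
  (1 / 2) * (((y₁ + α * (y₁ - θs ^ 2)) - θ ^ 2) ^ 2 + ((y₂ + α * (y₂ - θs)) - θ) ^ 2)

/-- The RE constant of `θs`: `sup {α ≥ 0 : θs is a local minimum point of E_α}`,
as an element of `[0, ∞]`. -/
noncomputable def reConst (y₁ y₂ θs : ℝ) : ℝ≥0∞ :=
  sSup (ENNReal.ofReal '' {α : ℝ | 0 ≤ α ∧ IsLocalMin (quarticEexp y₁ y₂ θs α) θs})

lemma quarticE_hasDerivAt (y₁ y₂ θ : ℝ) :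
    HasDerivAt (quarticE y₁ y₂) (-(2 * θ) * (y₁ - θ ^ 2) - (y₂ - θ)) θ := by
  have h1 : HasDerivAt (fun θ : ℝ => y₁ - θ ^ 2) (-(2 * θ)) θ := by
    simpa using ((hasDerivAt_pow 2 θ).const_sub y₁)
  have h2 : HasDerivAt (fun θ : ℝ => y₂ - θ) (-1) θ := by
    simpa using (hasDerivAt_id θ).const_sub y₂
  have := (((h1.pow 2).add (h2.pow 2)).const_mul (1 / 2 : ℝ))
  refine this.congr_deriv ?_
  ring

lemma key_lt (y₁ y₂ θs : ℝ)
    (hkey : -(2 * θs) * (y₁ - θs ^ 2) - (y₂ - θs) = 0)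
    (hy₁ : y₁ ≤ θs ^ 2) (α : ℝ) (hα : 0 ≤ α) (θ : ℝ) (hθ : θ ≠ θs) :
    quarticEexp y₁ y₂ θs α θs < quarticEexp y₁ y₂ θs α θ := by
  have hident : quarticEexp y₁ y₂ θs α θ - quarticEexp y₁ y₂ θs α θs
      = (1 / 2) * (θ - θs) ^ 2 * ((1 - 2 * (1 + α) * (y₁ - θs ^ 2)) + (θs + θ) ^ 2)
        - (θ - θs) * (1 + α) * (2 * θs * (y₁ - θs ^ 2) + (y₂ - θs)) := by
    simp only [quarticEexp]; ring
  have h2 : 2 * θs * (y₁ - θs ^ 2) + (y₂ - θs) = 0 := by linarith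
  have hsq : 0 < (θ - θs) ^ 2 := by
    have := sub_ne_zero.2 hθ; positivity
  have hfac : (0:ℝ) < (1 - 2 * (1 + α) * (y₁ - θs ^ 2)) + (θs + θ) ^ 2 := by
    nlinarith [sq_nonneg (θs + θ), mul_nonneg hα (sub_nonneg.2 hy₁)]
  rw [h2, mul_zero, sub_zero] at hident
  nlinarith [mul_pos hsq hfac]

theorem stmt_7 (y₁ y₂ θs : ℝ)
    (hcrit : deriv (quarticE y₁ y₂) θs = 0)
    (hpos : 0 < iteratedDeriv 2 (quarticE y₁ y₂) θs)
    (hy₁ : y₁ ≤ θs ^ 2) :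
    (∀ α : ℝ, 0 ≤ α →
      ∀ᶠ θ in 𝓝[≠] θs, quarticEexp y₁ y₂ θs α θs < quarticEexp y₁ y₂ θs α θ) ∧
    reConst y₁ y₂ θs = ⊤ := by
  have hkey : -(2 * θs) * (y₁ - θs ^ 2) - (y₂ - θs) = 0 := by
    rw [← (quarticE_hasDerivAt y₁ y₂ θs).deriv]; exact hcrit
  have hall : ∀ α : ℝ, 0 ≤ α → ∀ θ : ℝ, θ ≠ θs →
      quarticEexp y₁ y₂ θs α θs < quarticEexp y₁ y₂ θs α θ :=
    fun α hα θ hθ => key_lt y₁ y₂ θs hkey hy₁ α hα θ hθ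
  constructor
  · intro α hα
    exact Filter.eventually_of_mem self_mem_nhdsWithin (fun θ hθ => hall α hα θ hθ)
  · rw [reConst, sSup_eq_top]
    intro b hb
    refine ⟨ENNReal.ofReal (b.toReal + 1), ⟨b.toReal + 1, ⟨?_, ?_⟩, rfl⟩, ?_⟩
    · positivity
    · refine Filter.Eventually.of_forall (fun θ => ?_)
      by_cases hθ : θ = θs
      · simp [hθ]
      · exact (hall _ (by positivity) θ hθ).le
    · rw [ENNReal.lt_ofReal_iff_toReal_lt hb.ne]
      linarith
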